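/- If a nonnegative real sequence (u_k) satisfies ∑_{k=0}^∞ u_k < ∞, then liminf_{k→∞} k·log(k)·u_k = 0. -/

import Mathlib

open Filter Real

/-- Key telescoping bound: `loglog(n+1) - loglog n ≤ 1/(n log n)` for `n ≥ 2`. -/
lemma dlog_le (n : ℕ) (hn : 2 ≤ n) :
    Real.log (Real.log (n + 1)) - Real.log (Real.log n) ≤ 1 / (n * Real.log n) := by
  have hn2 : (2 : ℝ) ≤ (n : ℝ) := by exact_mod_cast hn
  have hnpos : (0 : ℝ) < n := by linarith
  have hlog : 0 < Real.log n := Real.log_pos (by linarith)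
  have hlog1 : Real.log n ≤ Real.log (n + 1) :=
    Real.log_le_log (by linarith) (by linarith)
  have hlogp1 : 0 < Real.log (n + 1) := lt_of_lt_of_le hlog hlog1
  -- Step 1: log(n+1) - log n ≤ 1/n
  have step1 : Real.log (n + 1) - Real.log n ≤ 1 / n := by
    have h1 : Real.log (n + 1) - Real.log n = Real.log ((n + 1) / n) := by
      rw [Real.log_div (by linarith) (by linarith)]
    have h2 : Real.log ((n + 1) / n) ≤ (n + 1) / n - 1 :=
      Real.log_le_sub_one_of_pos (by positivity)
    have h3 : ((n : ℝ) + 1) / n - 1 = 1 / n := by field_simp; ring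
    linarith
  -- Step 2
  have h4 : Real.log (Real.log (n + 1)) - Real.log (Real.log n)
      = Real.log (Real.log (n + 1) / Real.log n) := by
    rw [Real.log_div (ne_of_gt hlogp1) (ne_of_gt hlog)]
  have h5 : Real.log (Real.log (n + 1) / Real.log n) ≤ Real.log (n + 1) / Real.log n - 1 :=
    Real.log_le_sub_one_of_pos (by positivity)
  have h6 : Real.log (n + 1) / Real.log n - 1 = (Real.log (n + 1) - Real.log n) / Real.log n := by
    field_simp
  have h7 : (Real.log (n + 1) - Real.log n) / Real.log n ≤ (1 / n) / Real.log n := by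
    gcongr
  have h8 : (1 / (n : ℝ)) / Real.log n = 1 / (n * Real.log n) := by
    rw [div_div, one_div]
  linarith

/-- The telescoping series ∑ (loglog(k+1) - loglog k) diverges. -/
lemma not_summable_dloglog :
    ¬ Summable (fun k : ℕ => Real.log (Real.log (k + 1)) - Real.log (Real.log k)) := by
  intro h
  have htendsto := h.hasSum.tendsto_sum_nat
  have htel : ∀ n : ℕ, ∑ i ∈ Finset.range n,
      (Real.log (Real.log (i + 1)) - Real.log (Real.log i))
      = Real.log (Real.log n) - Real.log (Real.log (0 : ℕ)) := by
    intro n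
    have := Finset.sum_range_sub (fun i : ℕ => Real.log (Real.log i)) n
    convert this using 3 with i
    push_cast
    ring_nf
  simp only [htel, Nat.cast_zero, Real.log_zero, sub_zero] at htendsto
  have hgrow : Tendsto (fun n : ℕ => Real.log (Real.log n)) atTop atTop :=
    (Real.tendsto_log_atTop.comp Real.tendsto_log_atTop).comp tendsto_natCast_atTop_atTop
  exact not_tendsto_atTop_of_tendsto_nhds htendsto hgrow

/-- If a nonnegative real sequence `(u k)` has a convergent series, then
`liminf_{k→∞} k·log(k)·u_k = 0`. -/
theorem stmt0 (u : ℕ → ℝ) (hu : ∀ k, 0 ≤ u k) (hsum : Summable u) :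
    Filter.liminf (fun k : ℕ => (k : ℝ) * Real.log k * u k) Filter.atTop = 0 := by
  have hnonneg : ∀ k : ℕ, 0 ≤ (k : ℝ) * Real.log k * u k := fun k =>
    mul_nonneg (mul_nonneg (Nat.cast_nonneg k) (Real.log_natCast_nonneg k)) (hu k)
  have hset : {a : ℝ | ∀ᶠ k : ℕ in atTop, a ≤ (k : ℝ) * Real.log k * u k} = Set.Iic 0 := by
    ext a
    simp only [Set.mem_setOf_eq, Set.mem_Iic]
    constructor
    · intro h
      by_contra ha
      push_neg at ha
      obtain ⟨N0, hN0⟩ := eventually_atTop.1 h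
      set N := max N0 2 with hN
      have hsum' : Summable (fun k => u (k + N)) := (summable_nat_add_iff N).2 hsum
      have hdsum : Summable (fun k : ℕ =>
          Real.log (Real.log ((k + N : ℕ) + 1)) - Real.log (Real.log (k + N : ℕ))) := by
        apply Summable.of_nonneg_of_le (f := fun k => a⁻¹ * u (k + N)) ?_ ?_ (hsum'.mul_left a⁻¹)
        · intro k
          have h2 : 2 ≤ k + N := le_trans (le_max_right N0 2) (Nat.le_add_left N k)
          have h2R : (2 : ℝ) ≤ ((k + N : ℕ) : ℝ) := by exact_mod_cast h2
          have hlog : 0 < Real.log (k + N : ℕ) := Real.log_pos (by linarith)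
          exact sub_nonneg.2 (Real.log_le_log hlog
            (Real.log_le_log (by linarith) (by push_cast; linarith)))
        · intro k
          have h2 : 2 ≤ k + N := le_trans (le_max_right N0 2) (Nat.le_add_left N k)
          have h2R : (2 : ℝ) ≤ ((k + N : ℕ) : ℝ) := by exact_mod_cast h2
          have hlog : 0 < Real.log (k + N : ℕ) := Real.log_pos (by linarith)
          have hX : (0 : ℝ) < (k + N : ℕ) * Real.log (k + N : ℕ) := by positivity
          have hbound := dlog_le (k + N) h2
          have huk : a ≤ ((k + N : ℕ) : ℝ) * Real.log (k + N : ℕ) * u (k + N) :=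
            hN0 (k + N) (le_trans (le_max_left N0 2) (Nat.le_add_left N k))
          rw [le_inv_mul_iff₀ ha]
          calc a * (Real.log (Real.log ((k + N : ℕ) + 1)) - Real.log (Real.log (k + N : ℕ)))
              ≤ a * (1 / ((k + N : ℕ) * Real.log (k + N : ℕ))) := by
                exact mul_le_mul_of_nonneg_left hbound ha.le
            _ ≤ u (k + N) := by
                rw [mul_one_div, div_le_iff₀ hX]
                linarith [mul_comm (u (k + N)) (((k + N : ℕ) : ℝ) * Real.log (k + N : ℕ))]
      have hdsum' : Summable (fun k : ℕ =>
          Real.log (Real.log (k + 1)) - Real.log (Real.log k)) := by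
        have := (summable_nat_add_iff (f := fun k : ℕ =>
          Real.log (Real.log (k + 1)) - Real.log (Real.log k)) N).1 ?_
        · exact this
        · convert hdsum using 2 with k
      exact not_summable_dloglog hdsum'
    · intro ha
      exact Eventually.of_forall fun k => ha.trans (hnonneg k)
  rw [Filter.liminf_eq, hset, csSup_Iic]
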